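/- Fix n ≥ 1, K ≥ 1, p ≥ 1, R_x > 0 and c_0 > 0 with c_0·n ≥ 1. For a dataset X = ((x_1,y_1),…,(x_n,y_n)) with x_j ∈ ℝ^p, ‖x_j‖ ≤ R_x, y_j ∈ {1,…,K}, let I_k(X) = {j : y_j = k}, μ̂_k(X) = |I_k(X)|/n, m̂_k(X) = (1/|I_k(X)|)·Σ_{j ∈ I_k(X)} x_j when I_k(X) ≠ ∅ and m̂_k(X) = 0 otherwise, and define γ(X) = max( min_{k ≤ K} |I_k(X)| − c_0·n − 1, 0 ). Then: (i) for any neighboring datasets X, X', |γ(X) − γ(X')| ≤ 1; and (ii) if γ(X) > 0, then for every neighbor X' of X, ( Σ_{k=1}^K |μ̂_k(X) − μ̂_k(X')|² + Σ_{k=1}^K ‖m̂_k(X) − m̂_k(X')‖² )^{1/2} ≤ (2/n)·√(2R_x²/c_0² + 2). -/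

import Mathlib

open MeasureTheory ProbabilityTheory Matrix
open scoped Classical NNReal ENNReal RealInnerProductSpace

noncomputable section

namespace EPTR

variable {Z : Type*}

/-- Hamming distance between two datasets of size `n`. -/
def hDist {n : ℕ} (X X' : Fin n → Z) : ℕ :=
  (Finset.univ.filter fun i => X i ≠ X' i).card

/-- Two datasets are neighbors if they differ in exactly one coordinate. -/
def Neighbor {n : ℕ} (X X' : Fin n → Z) : Prop := hDist X X' = 1

/-- Gaussian measure on Euclidean space with mean `m` and covariance `v • I`
(the product of one-dimensional Gaussians of variance `v`). -/
def gaussianE {ι : Type*} [Fintype ι] (m : EuclideanSpace ℝ ι) (v : ℝ≥0) :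
    Measure (EuclideanSpace ℝ ι) :=
  (Measure.pi fun i => gaussianReal (m i) v).map (MeasurableEquiv.toLp 2 (ι → ℝ))

/-- The threshold shift `M = 1 + (2/ε) log (max (1/δ) (1/ε))` of the ePTR mechanism. -/
def Mshift (ε δ : ℝ) : ℝ := 1 + 2 / ε * Real.log (max (1 / δ) (1 / ε))

/-- The release probability of the ePTR mechanism at sub-distance value `g`. -/
def relProb (ε δ g : ℝ) : ℝ :=
  Real.exp (ε * (g - Mshift ε δ) / 2) / (Real.exp (ε * (g - Mshift ε δ) / 2) + 1)

/-- The standard deviation `s = (2α/ε)√(2 log(1.25/δ))` of the ePTR Gaussian noise. -/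
def noiseSD (ε δ α : ℝ) : ℝ := 2 * α / ε * Real.sqrt (2 * Real.log (1.25 / δ))

/-- Output distribution of the ePTR mechanism on input dataset `X`
(Euclidean-space valued version). -/
def ePTR {n : ℕ} {ι : Type*} [Fintype ι] (ε δ α : ℝ)
    (θhat : (Fin n → Z) → EuclideanSpace ℝ ι) (γ : (Fin n → Z) → ℝ)
    (πbot : Measure (EuclideanSpace ℝ ι)) (X : Fin n → Z) :
    Measure (EuclideanSpace ℝ ι) :=
  ENNReal.ofReal (relProb ε δ (γ X)) • gaussianE (θhat X) (Real.toNNReal (noiseSD ε δ α ^ 2))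
    + ENNReal.ofReal (1 - relProb ε δ (γ X)) • πbot

/-- Output distribution of the ePTR mechanism on input dataset `X` (real valued version). -/
def ePTR1 {n : ℕ} (ε δ α : ℝ)
    (θhat : (Fin n → Z) → ℝ) (γ : (Fin n → Z) → ℝ)
    (πbot : Measure ℝ) (X : Fin n → Z) : Measure ℝ :=
  ENNReal.ofReal (relProb ε δ (γ X)) • gaussianReal (θhat X) (Real.toNNReal (noiseSD ε δ α ^ 2))
    + ENNReal.ofReal (1 - relProb ε δ (γ X)) • πbot

/-- `(ε, δ)`-differential privacy of a mechanism: for all neighboring datasets `X, X'`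
and all measurable events `B`, `μ_X(B) ≤ e^ε μ_{X'}(B) + δ`. -/
def IsDP {n : ℕ} {Ω : Type*} [MeasurableSpace Ω]
    (mech : (Fin n → Z) → Measure Ω) (ε δ : ℝ) : Prop :=
  ∀ X X' : Fin n → Z, Neighbor X X' → ∀ B : Set Ω, MeasurableSet B →
    mech X B ≤ ENNReal.ofReal (Real.exp ε) * mech X' B + ENNReal.ofReal δ

/-- Projection onto the closed ball of radius `a` in a normed space:
`proj a v = (a / max ‖v‖ a) • v`. -/
def proj {V : Type*} [NormedAddCommGroup V] [Module ℝ V] (a : ℝ) (v : V) : V :=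
  (a / max ‖v‖ a) • v

/-- Identification of `Fin p → ℝ` with Euclidean space. -/
def toE {p : ℕ} : (Fin p → ℝ) → EuclideanSpace ℝ (Fin p) :=
  ⇑(EuclideanSpace.equiv (Fin p) ℝ).symm

/-- ℓ²-operator norm of a square matrix. -/
def opNorm {p : ℕ} (A : Matrix (Fin p) (Fin p) ℝ) : ℝ :=
  ‖Matrix.toEuclideanCLM (𝕜 := ℝ) A‖

/-- Smallest eigenvalue of a (symmetric) matrix, via the Rayleigh quotient. -/
def lambdaMin {p : ℕ} (A : Matrix (Fin p) (Fin p) ℝ) : ℝ :=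
  ⨅ v : Metric.sphere (0 : EuclideanSpace ℝ (Fin p)) 1,
    ⟪Matrix.toEuclideanCLM (𝕜 := ℝ) A v.1, v.1⟫

/-- Index set of data points carrying label `k`. -/
def Ik {n K : ℕ} {E : Type*} (X : Fin n → E × Fin K) (k : Fin K) : Finset (Fin n) :=
  Finset.univ.filter fun j => (X j).2 = k

/-- Class-`k` sample frequency `μ̂_k = |I_k| / n`. -/
def classFreq {n K : ℕ} {E : Type*} (X : Fin n → E × Fin K) (k : Fin K) : ℝ :=
  (Ik X k).card / n

/-- Class-`k` sample mean (equal to `0` if the class is empty). -/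
def classMean {n K p : ℕ} (X : Fin n → EuclideanSpace ℝ (Fin p) × Fin K) (k : Fin K) :
    EuclideanSpace ℝ (Fin p) :=
  ((Ik X k).card : ℝ)⁻¹ • ∑ j ∈ Ik X k, (X j).1

/-- The sub-distance of the ePTR Bayes classifier:
`γ(X) = max(min_k |I_k(X)| - c₀ n - 1, 0)`. -/
def gammaBC {n K : ℕ} {E : Type*} (c0 : ℝ) (X : Fin n → E × Fin K) : ℝ :=
  max (((⨅ k : Fin K, (Ik X k).card : ℕ) : ℝ) - c0 * n - 1) 0

end EPTR

section Helpers

lemma neighbor_struct {Z : Type*} {n : ℕ} {X X' : Fin n → Z} (h : EPTR.Neighbor X X') :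
    ∃ j0, X j0 ≠ X' j0 ∧ ∀ j, j ≠ j0 → X j = X' j := by
  have h' : (Finset.univ.filter fun i => X i ≠ X' i).card = 1 := h
  obtain ⟨j0, hj0⟩ := Finset.card_eq_one.mp h'
  refine ⟨j0, ?_, ?_⟩
  · have : j0 ∈ Finset.univ.filter fun i => X i ≠ X' i := by
      rw [hj0]; exact Finset.mem_singleton_self j0
    simpa using this
  · intro j hj
    by_contra hne
    have : j ∈ Finset.univ.filter fun i => X i ≠ X' i := by simp [hne]
    rw [hj0] at this
    exact hj (Finset.mem_singleton.mp this)

lemma Ik_subset' {n K : ℕ} {E : Type*} {X X' : Fin n → E × Fin K} {j0 : Fin n}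
    (hoff : ∀ j, j ≠ j0 → X j = X' j) (k : Fin K) :
    EPTR.Ik X' k ⊆ insert j0 (EPTR.Ik X k) := by
  intro j hj
  rcases eq_or_ne j j0 with rfl | hne
  · exact Finset.mem_insert_self _ _
  · refine Finset.mem_insert_of_mem ?_
    simp only [EPTR.Ik, Finset.mem_filter, Finset.mem_univ, true_and] at hj ⊢
    rw [hoff j hne]; exact hj

lemma Ik_card_le {n K : ℕ} {E : Type*} {X X' : Fin n → E × Fin K} {j0 : Fin n}
    (hoff : ∀ j, j ≠ j0 → X j = X' j) (k : Fin K) :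
    (EPTR.Ik X' k).card ≤ (EPTR.Ik X k).card + 1 :=
  le_trans (Finset.card_le_card (Ik_subset' hoff k)) (Finset.card_insert_le _ _)

lemma norm_mean_le {V : Type*} [NormedAddCommGroup V] [NormedSpace ℝ V] {n : ℕ}
    (s : Finset (Fin n)) (f : Fin n → V) {Rx : ℝ} (hRx : 0 ≤ Rx)
    (hf : ∀ j ∈ s, ‖f j‖ ≤ Rx) :
    ‖((s.card : ℝ))⁻¹ • ∑ j ∈ s, f j‖ ≤ Rx := by
  rcases s.eq_empty_or_nonempty with rfl | hs
  · simpa using hRx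
  · have hc : (0:ℝ) < s.card := by exact_mod_cast hs.card_pos
    rw [norm_smul, Real.norm_eq_abs, abs_inv, abs_of_pos hc]
    have h1 : ‖∑ j ∈ s, f j‖ ≤ s.card * Rx := by
      calc ‖∑ j ∈ s, f j‖ ≤ ∑ j ∈ s, ‖f j‖ := norm_sum_le _ _
        _ ≤ ∑ _j ∈ s, Rx := Finset.sum_le_sum hf
        _ = s.card * Rx := by rw [Finset.sum_const, nsmul_eq_mul]
    calc (s.card:ℝ)⁻¹ * ‖∑ j ∈ s, f j‖ ≤ (s.card:ℝ)⁻¹ * (s.card * Rx) := by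
          exact mul_le_mul_of_nonneg_left h1 (by positivity)
      _ = Rx := by field_simp

lemma mean_insert {V : Type*} [NormedAddCommGroup V] [NormedSpace ℝ V] {n : ℕ}
    {s : Finset (Fin n)} {j0 : Fin n} (hj0 : j0 ∉ s) (hs : s.Nonempty)
    (f : Fin n → V) {Rx : ℝ} (hRx : 0 ≤ Rx) (hf : ∀ j, ‖f j‖ ≤ Rx) :
    ‖(((insert j0 s).card : ℝ))⁻¹ • ∑ j ∈ insert j0 s, f j
      - ((s.card : ℝ))⁻¹ • ∑ j ∈ s, f j‖ ≤ 2 * Rx / ((s.card : ℝ) + 1) := by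
  have hc : (0:ℝ) < s.card := by exact_mod_cast hs.card_pos
  have hcard : ((insert j0 s).card : ℝ) = (s.card : ℝ) + 1 := by
    rw [Finset.card_insert_of_notMem hj0, Nat.cast_add, Nat.cast_one]
  rw [Finset.sum_insert hj0, hcard]
  set c : ℝ := (s.card : ℝ) with hcdef
  have hid : (c+1)⁻¹ • (f j0 + ∑ j ∈ s, f j) - c⁻¹ • ∑ j ∈ s, f j
      = (c+1)⁻¹ • (f j0 - c⁻¹ • ∑ j ∈ s, f j) := by
    have h1 : c ≠ 0 := hc.ne'
    have h2 : c + 1 ≠ 0 := by positivity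
    match_scalars <;> field_simp <;> ring
  rw [hid, norm_smul, Real.norm_eq_abs, abs_inv, abs_of_pos (by linarith : (0:ℝ) < c+1)]
  have hm : ‖c⁻¹ • ∑ j ∈ s, f j‖ ≤ Rx := norm_mean_le s f hRx (fun j _ => hf j)
  have hb : ‖f j0 - c⁻¹ • ∑ j ∈ s, f j‖ ≤ 2 * Rx := by
    calc ‖f j0 - c⁻¹ • ∑ j ∈ s, f j‖ ≤ ‖f j0‖ + ‖c⁻¹ • ∑ j ∈ s, f j‖ := norm_sub_le _ _
      _ ≤ Rx + Rx := add_le_add (hf j0) hm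
      _ = 2 * Rx := by ring
  rw [div_eq_inv_mul]
  exact mul_le_mul_of_nonneg_left hb (by positivity)

end Helpers


/-- The sub-distance `γ(X) = max(min_k |I_k(X)| - c₀n - 1, 0)` of the ePTR Bayes classifier is
1-Lipschitz with respect to the neighbor relation, and on `{γ > 0}` the concatenated statistic
`(μ̂_1,…,μ̂_K, m̂_1,…,m̂_K)` has local sensitivity at most `(2/n)·√(2R_x²/c₀² + 2)`. -/
theorem bayes_subdistance_and_sensitivity {n K p : ℕ} (hn : 1 ≤ n) (hK : 1 ≤ K) (hp : 1 ≤ p)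
    {Rx c0 : ℝ} (hRx : 0 < Rx) (hc0 : 0 < c0) (hc0n : 1 ≤ c0 * n) :
    (∀ X X' : Fin n → EuclideanSpace ℝ (Fin p) × Fin K, EPTR.Neighbor X X' →
        |EPTR.gammaBC c0 X - EPTR.gammaBC c0 X'| ≤ 1) ∧
      ∀ X X' : Fin n → EuclideanSpace ℝ (Fin p) × Fin K,
        (∀ j, ‖(X j).1‖ ≤ Rx) → (∀ j, ‖(X' j).1‖ ≤ Rx) →
        EPTR.Neighbor X X' → 0 < EPTR.gammaBC c0 X →
        Real.sqrt (∑ k, (EPTR.classFreq X k - EPTR.classFreq X' k) ^ 2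
            + ∑ k, ‖EPTR.classMean X k - EPTR.classMean X' k‖ ^ 2)
          ≤ 2 / n * Real.sqrt (2 * Rx ^ 2 / c0 ^ 2 + 2) := by
  have hn0 : (0:ℝ) < n := by exact_mod_cast hn
  haveI hNK : Nonempty (Fin K) := ⟨⟨0, hK⟩⟩
  have hmem : ∀ (Y : Fin n → EuclideanSpace ℝ (Fin p) × Fin K) (k : Fin K) (j : Fin n),
      j ∈ EPTR.Ik Y k ↔ (Y j).2 = k := by
    intro Y k j; simp [EPTR.Ik]
  constructor
  · -- Part (i)
    intro X X' hnb
    obtain ⟨j0, hj0, hoff⟩ := neighbor_struct hnb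
    have hoff' : ∀ j, j ≠ j0 → X' j = X j := fun j hj => (hoff j hj).symm
    have key : ∀ (Y Y' : Fin n → EuclideanSpace ℝ (Fin p) × Fin K),
        (∀ k, (EPTR.Ik Y k).card ≤ (EPTR.Ik Y' k).card + 1) →
        (⨅ k, (EPTR.Ik Y k).card) ≤ (⨅ k, (EPTR.Ik Y' k).card) + 1 := by
      intro Y Y' hc
      obtain ⟨k0, hk0⟩ := Finite.exists_min (fun k => (EPTR.Ik Y' k).card)
      have h1 : (⨅ k, (EPTR.Ik Y' k).card) = (EPTR.Ik Y' k0).card :=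
        le_antisymm (ciInf_le (OrderBot.bddBelow _) k0) (le_ciInf hk0)
      calc (⨅ k, (EPTR.Ik Y k).card) ≤ (EPTR.Ik Y k0).card :=
            ciInf_le (OrderBot.bddBelow _) k0
        _ ≤ (EPTR.Ik Y' k0).card + 1 := hc k0
        _ = (⨅ k, (EPTR.Ik Y' k).card) + 1 := by rw [h1]
    have h1 := key X X' (fun k => Ik_card_le hoff' k)
    have h2 := key X' X (fun k => Ik_card_le hoff k)
    have c1 : ((⨅ k, (EPTR.Ik X k).card : ℕ) : ℝ)
        ≤ ((⨅ k, (EPTR.Ik X' k).card : ℕ) : ℝ) + 1 := by exact_mod_cast h1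
    have c2 : ((⨅ k, (EPTR.Ik X' k).card : ℕ) : ℝ)
        ≤ ((⨅ k, (EPTR.Ik X k).card : ℕ) : ℝ) + 1 := by exact_mod_cast h2
    unfold EPTR.gammaBC
    set A : ℝ := ((⨅ k, (EPTR.Ik X k).card : ℕ) : ℝ) with hA
    set B : ℝ := ((⨅ k, (EPTR.Ik X' k).card : ℕ) : ℝ) with hB
    calc |max (A - c0 * n - 1) 0 - max (B - c0 * n - 1) 0|
        ≤ |(A - c0 * n - 1) - (B - c0 * n - 1)| := abs_max_sub_max_le_abs _ _ _
      _ = |A - B| := by ring_nf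
      _ ≤ 1 := abs_le.mpr ⟨by linarith, by linarith⟩
  · -- Part (ii)
    intro X X' hX hX' hnb hγ
    obtain ⟨j0, hj0, hoff⟩ := neighbor_struct hnb
    have hoff' : ∀ j, j ≠ j0 → X' j = X j := fun j hj => (hoff j hj).symm
    have hc0npos : (0:ℝ) < c0 * n := by linarith
    have hbig : ∀ k, c0 * n + 1 < ((EPTR.Ik X k).card : ℝ) := by
      intro k
      have hγ' : 0 < max (((⨅ k, (EPTR.Ik X k).card : ℕ) : ℝ) - c0 * n - 1) 0 := hγ
      have h0 : 0 < ((⨅ k, (EPTR.Ik X k).card : ℕ) : ℝ) - c0 * n - 1 := by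
        rcases lt_max_iff.mp hγ' with h | h
        · exact h
        · exact absurd h (lt_irrefl 0)
      have hle : (⨅ k, (EPTR.Ik X k).card) ≤ (EPTR.Ik X k).card :=
        ciInf_le (OrderBot.bddBelow _) k
      have hle' : ((⨅ k, (EPTR.Ik X k).card : ℕ) : ℝ) ≤ ((EPTR.Ik X k).card : ℝ) := by
        exact_mod_cast hle
      linarith
    have hzero : ∀ k, k ≠ (X j0).2 → k ≠ (X' j0).2 →
        EPTR.classFreq X k = EPTR.classFreq X' k ∧
          EPTR.classMean X k = EPTR.classMean X' k := by
      intro k hka hkb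
      have hseq : EPTR.Ik X k = EPTR.Ik X' k := by
        ext j
        rw [hmem, hmem]
        rcases eq_or_ne j j0 with rfl | hne
        · constructor
          · intro h; exact absurd h (Ne.symm hka)
          · intro h; exact absurd h (Ne.symm hkb)
        · rw [hoff j hne]
      constructor
      · unfold EPTR.classFreq; rw [hseq]
      · unfold EPTR.classMean
        rw [hseq]
        congr 1
        apply Finset.sum_congr rfl
        intro j hj
        have hne : j ≠ j0 := by
          intro h
          rw [h] at hj
          exact hkb (((hmem X' k j0).mp hj).symm)
        rw [hoff j hne]
    have hfa : ∀ k, |EPTR.classFreq X k - EPTR.classFreq X' k| ≤ 1 / n := by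
      intro k
      have ha1 : ((EPTR.Ik X' k).card : ℝ) ≤ ((EPTR.Ik X k).card : ℝ) + 1 := by
        exact_mod_cast Ik_card_le hoff k
      have ha2 : ((EPTR.Ik X k).card : ℝ) ≤ ((EPTR.Ik X' k).card : ℝ) + 1 := by
        exact_mod_cast Ik_card_le hoff' k
      unfold EPTR.classFreq
      rw [div_sub_div_same, abs_div, abs_of_pos hn0]
      gcongr
      exact abs_le.mpr ⟨by linarith, by linarith⟩
    have hM : ∀ k ∈ ({(X j0).2, (X' j0).2} : Finset (Fin K)),
        ‖EPTR.classMean X k - EPTR.classMean X' k‖ ≤ 2 * Rx / (c0 * n) := by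
      by_cases hab : (X j0).2 = (X' j0).2
      · have hIkeq : ∀ k, EPTR.Ik X k = EPTR.Ik X' k := by
          intro k; ext j; rw [hmem, hmem]
          rcases eq_or_ne j j0 with rfl | hne
          · rw [hab]
          · rw [hoff j hne]
        intro k _hk
        by_cases hka : k = (X j0).2
        · subst hka
          have hjm : j0 ∈ EPTR.Ik X (X j0).2 := (hmem X _ j0).mpr rfl
          have hcpos : (0:ℝ) < ((EPTR.Ik X (X j0).2).card : ℝ) := by
            linarith [hbig (X j0).2]
          unfold EPTR.classMean
          rw [← hIkeq (X j0).2, ← smul_sub, ← Finset.sum_sub_distrib]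
          rw [Finset.sum_eq_single j0
            (fun j _hjs hne => by rw [hoff j hne, sub_self])
            (fun h => absurd hjm h)]
          rw [norm_smul, Real.norm_eq_abs, abs_inv, abs_of_pos hcpos]
          have hxx : ‖(X j0).1 - (X' j0).1‖ ≤ 2 * Rx := by
            calc ‖(X j0).1 - (X' j0).1‖ ≤ ‖(X j0).1‖ + ‖(X' j0).1‖ := norm_sub_le _ _
              _ ≤ Rx + Rx := add_le_add (hX j0) (hX' j0)
              _ = 2 * Rx := by ring
          calc ((EPTR.Ik X (X j0).2).card : ℝ)⁻¹ * ‖(X j0).1 - (X' j0).1‖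
              ≤ ((EPTR.Ik X (X j0).2).card : ℝ)⁻¹ * (2 * Rx) :=
                mul_le_mul_of_nonneg_left hxx (by positivity)
            _ = 2 * Rx / ((EPTR.Ik X (X j0).2).card : ℝ) := by
                rw [div_eq_inv_mul]
            _ ≤ 2 * Rx / (c0 * n) := by
                gcongr
                linarith [hbig (X j0).2]
        · have hkb : k ≠ (X' j0).2 := fun h => hka (h.trans hab.symm)
          rw [(hzero k hka hkb).2, sub_self, norm_zero]
          positivity
      · intro k hk
        rcases Finset.mem_insert.mp hk with rfl | hk'
        · -- class (X j0).2 loses point j0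
          have hjm : j0 ∈ EPTR.Ik X (X j0).2 := (hmem X _ j0).mpr rfl
          have hserase : EPTR.Ik X' (X j0).2 = (EPTR.Ik X (X j0).2).erase j0 := by
            ext j
            rw [Finset.mem_erase, hmem, hmem]
            rcases eq_or_ne j j0 with rfl | hne
            · simp [Ne.symm hab]
            · rw [← hoff j hne]
              simp [hne]
          have hins : insert j0 (EPTR.Ik X' (X j0).2) = EPTR.Ik X (X j0).2 := by
            rw [hserase, Finset.insert_erase hjm]
          have hnm : j0 ∉ EPTR.Ik X' (X j0).2 := by
            rw [hserase]; exact Finset.notMem_erase _ _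
          have hcard : ((EPTR.Ik X (X j0).2).card : ℝ)
              = ((EPTR.Ik X' (X j0).2).card : ℝ) + 1 := by
            rw [← hins, Finset.card_insert_of_notMem hnm, Nat.cast_add, Nat.cast_one]
          have hne2 : (EPTR.Ik X' (X j0).2).Nonempty := by
            apply Finset.card_pos.mp
            have : (0:ℝ) < ((EPTR.Ik X' (X j0).2).card : ℝ) := by
              linarith [hbig (X j0).2]
            exact_mod_cast this
          have hsum' : ∑ j ∈ EPTR.Ik X' (X j0).2, (X' j).1
              = ∑ j ∈ EPTR.Ik X' (X j0).2, (X j).1 := by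
            apply Finset.sum_congr rfl
            intro j hj
            have hne : j ≠ j0 := fun h => hnm (h ▸ hj)
            rw [← hoff j hne]
          unfold EPTR.classMean
          rw [hsum', ← hins]
          refine le_trans (mean_insert hnm hne2 (fun j => (X j).1) hRx.le hX) ?_
          gcongr
          linarith [hbig (X j0).2]
        · -- class (X' j0).2 gains point j0
          have hkb : k = (X' j0).2 := Finset.mem_singleton.mp hk'
          subst hkb
          have hnm : j0 ∉ EPTR.Ik X (X' j0).2 := by
            rw [hmem]; exact hab
          have hins : insert j0 (EPTR.Ik X (X' j0).2) = EPTR.Ik X' (X' j0).2 := by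
            ext j
            rw [Finset.mem_insert, hmem, hmem]
            rcases eq_or_ne j j0 with rfl | hne
            · simp
            · rw [hoff j hne]
              simp [hne]
          have hne2 : (EPTR.Ik X (X' j0).2).Nonempty := by
            apply Finset.card_pos.mp
            have : (0:ℝ) < ((EPTR.Ik X (X' j0).2).card : ℝ) := by
              linarith [hbig (X' j0).2]
            exact_mod_cast this
          have hsum' : ∑ j ∈ EPTR.Ik X (X' j0).2, (X j).1
              = ∑ j ∈ EPTR.Ik X (X' j0).2, (X' j).1 := by
            apply Finset.sum_congr rfl
            intro j hj
            have hne : j ≠ j0 := fun h => hnm (h ▸ hj)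
            rw [hoff j hne]
          unfold EPTR.classMean
          rw [norm_sub_rev, hsum', ← hins]
          refine le_trans (mean_insert hnm hne2 (fun j => (X' j).1) hRx.le hX') ?_
          gcongr
          linarith [hbig (X' j0).2]
    -- assemble the sums
    have hres : ∀ (f : Fin K → ℝ) (B : ℝ), 0 ≤ B →
        (∀ k, k ≠ (X j0).2 → k ≠ (X' j0).2 → f k = 0) →
        (∀ k ∈ ({(X j0).2, (X' j0).2} : Finset (Fin K)), f k ≤ B) →
        ∑ k, f k ≤ 2 * B := by
      intro f B hB0 h0 hB
      have hsub : ∑ k ∈ ({(X j0).2, (X' j0).2} : Finset (Fin K)), f k = ∑ k, f k := by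
        apply Finset.sum_subset (Finset.subset_univ _)
        intro k _ hk
        simp only [Finset.mem_insert, Finset.mem_singleton] at hk
        push_neg at hk
        exact h0 k hk.1 hk.2
      rw [← hsub]
      have hcd : ((({(X j0).2, (X' j0).2} : Finset (Fin K))).card : ℝ) ≤ 2 := by
        have h2 : ({(X j0).2, (X' j0).2} : Finset (Fin K)).card ≤ 2 :=
          le_trans (Finset.card_insert_le _ _) (by simp)
        exact_mod_cast h2
      calc ∑ k ∈ ({(X j0).2, (X' j0).2} : Finset (Fin K)), f k
          ≤ ((({(X j0).2, (X' j0).2} : Finset (Fin K))).card : ℝ) * B := by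
            have := Finset.sum_le_card_nsmul
              ({(X j0).2, (X' j0).2} : Finset (Fin K)) f B hB
            simpa [nsmul_eq_mul] using this
        _ ≤ 2 * B := mul_le_mul_of_nonneg_right hcd hB0
    have hS1 : ∑ k, (EPTR.classFreq X k - EPTR.classFreq X' k) ^ 2 ≤ 2 * (1 / n) ^ 2 := by
      refine hres _ _ (by positivity) (fun k hka hkb => by rw [(hzero k hka hkb).1]; ring)
        (fun k _ => ?_)
      rw [← sq_abs]
      exact pow_le_pow_left₀ (abs_nonneg _) (hfa k) 2
    have hS2 : ∑ k, ‖EPTR.classMean X k - EPTR.classMean X' k‖ ^ 2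
        ≤ 2 * (2 * Rx / (c0 * n)) ^ 2 := by
      refine hres _ _ (by positivity)
        (fun k hka hkb => by rw [(hzero k hka hkb).2, sub_self, norm_zero]; ring)
        (fun k hk => pow_le_pow_left₀ (norm_nonneg _) (hM k hk) 2)
    have hrhs : 0 ≤ 2 / (n:ℝ) * Real.sqrt (2 * Rx ^ 2 / c0 ^ 2 + 2) := by positivity
    have hkey : ∑ k, (EPTR.classFreq X k - EPTR.classFreq X' k) ^ 2
        + ∑ k, ‖EPTR.classMean X k - EPTR.classMean X' k‖ ^ 2
        ≤ (2 / n * Real.sqrt (2 * Rx ^ 2 / c0 ^ 2 + 2)) ^ 2 := by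
      have hst : Real.sqrt (2 * Rx ^ 2 / c0 ^ 2 + 2) ^ 2 = 2 * Rx ^ 2 / c0 ^ 2 + 2 :=
        Real.sq_sqrt (by positivity)
      have hc0' : c0 ≠ 0 := hc0.ne'
      have hn' : (n:ℝ) ≠ 0 := hn0.ne'
      have hexp : (2 / (n:ℝ) * Real.sqrt (2 * Rx ^ 2 / c0 ^ 2 + 2)) ^ 2
          = 2 * (2 * Rx / (c0 * n)) ^ 2 + 8 * (1 / n) ^ 2 := by
        rw [mul_pow, hst]; field_simp; ring
      rw [hexp]
      have h1n : (0:ℝ) ≤ (1 / (n:ℝ)) ^ 2 := by positivity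
      linarith
    exact le_trans (Real.sqrt_le_sqrt hkey) (le_of_eq (Real.sqrt_sq hrhs))
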